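/- Let T be a left continuous t-norm and L = max on [0,∞]. Then for all d.d.f.'s f, g and all x ∈ [0,∞), (max⊗T)(f,g)(x) = T(f(x), g(x)). -/

import Mathlib

open ENNReal Set

/-- A distance distribution function: increasing `f : [0,∞] → [0,1]` with
`f 0 = 0`, `f ∞ = 1`, left continuous on `(0,∞)`. -/
def IsDDF (f : ℝ≥0∞ → ℝ≥0∞) : Prop :=
  Monotone f ∧ (∀ x, f x ≤ 1) ∧ f 0 = 0 ∧ f ⊤ = 1 ∧
    ∀ x : ℝ≥0∞, 0 < x → x < ⊤ → f x = ⨆ y ∈ Set.Iio x, f y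

/-- The largest quasi-inverse `f∨ y = inf {x | f x > y}`. -/
noncomputable def qInv (f : ℝ≥0∞ → ℝ≥0∞) : ℝ≥0∞ → ℝ≥0∞ :=
  fun y => sInf {x | y < f x}

/-- The unit interval `[0,1]` inside `[0,∞]`. -/
def I01 : Set ℝ≥0∞ := Set.Icc 0 1

/-- A left continuous t-norm on `[0,1]`: commutative, associative, increasing in each
place, identity `1`, left continuous in each variable. -/
def IsLeftContTNorm (T : ℝ≥0∞ → ℝ≥0∞ → ℝ≥0∞) : Prop :=
  (∀ p ∈ I01, ∀ q ∈ I01, T p q ∈ I01) ∧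
  (∀ p ∈ I01, ∀ q ∈ I01, T p q = T q p) ∧
  (∀ p ∈ I01, ∀ q ∈ I01, ∀ r ∈ I01, T (T p q) r = T p (T q r)) ∧
  (∀ p ∈ I01, T p 1 = p) ∧
  (∀ q ∈ I01, ∀ p₁ ∈ I01, ∀ p₂ ∈ I01, p₁ ≤ p₂ → T p₁ q ≤ T p₂ q) ∧
  (∀ q ∈ I01, ∀ p ∈ I01, 0 < p → T p q = ⨆ p' ∈ Set.Iio p, T p' q)

/-- A right continuous `L`-operation on `[0,∞]`: commutative, associative, increasing in
each place, identity `0`, right continuous in each variable. -/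
def IsRightContLOp (L : ℝ≥0∞ → ℝ≥0∞ → ℝ≥0∞) : Prop :=
  (∀ x y, L x y = L y x) ∧
  (∀ x y z, L (L x y) z = L x (L y z)) ∧
  (∀ x, L x 0 = x) ∧
  (∀ y x₁ x₂, x₁ ≤ x₂ → L x₁ y ≤ L x₂ y) ∧
  (∀ y x, x < ⊤ → L x y = ⨅ x' ∈ Set.Ioi x, L x' y)

/-- Joint continuity of a t-norm on `[0,1] × [0,1]`. -/
def TNormContinuous (T : ℝ≥0∞ → ℝ≥0∞ → ℝ≥0∞) : Prop :=
  ContinuousOn (fun pq : ℝ≥0∞ × ℝ≥0∞ => T pq.1 pq.2) (I01 ×ˢ I01)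

/-- The tensor-product triangle function:
`(L ⊗ T)(f,g)(x) = sup {T (f r) (g s) | L r s < x}` for `x < ∞`, and `1` at `∞`. -/
noncomputable def tensor (L T : ℝ≥0∞ → ℝ≥0∞ → ℝ≥0∞) (f g : ℝ≥0∞ → ℝ≥0∞) :
    ℝ≥0∞ → ℝ≥0∞ :=
  fun x => if x = ⊤ then 1 else ⨆ r, ⨆ s, ⨆ _ : L r s < x, T (f r) (g s)

theorem tensor_max (T : ℝ≥0∞ → ℝ≥0∞ → ℝ≥0∞) (hT : IsLeftContTNorm T)
    (f g : ℝ≥0∞ → ℝ≥0∞) (hf : IsDDF f) (hg : IsDDF g) :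
    ∀ x : ℝ≥0∞, x ≠ ⊤ → tensor (fun r s => r ⊔ s) T f g x = T (f x) (g x) := by
  obtain ⟨hTmem, hTcomm, hTassoc, hTid, hTmono, hTlc⟩ := hT
  obtain ⟨hfm, hf1, hf0, hftop, hflc⟩ := hf
  obtain ⟨hgm, hg1, hg0, hgtop, hglc⟩ := hg
  have memf : ∀ x, f x ∈ I01 := fun x => ⟨zero_le, hf1 x⟩
  have memg : ∀ x, g x ∈ I01 := fun x => ⟨zero_le, hg1 x⟩
  have h1 : (1:ℝ≥0∞) ∈ I01 := ⟨zero_le, le_rfl⟩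
  have h0 : (0:ℝ≥0∞) ∈ I01 := ⟨le_rfl, zero_le_one⟩
  have hT0 : ∀ q ∈ I01, T 0 q = 0 := fun q hq => le_antisymm
    (calc T 0 q = T q 0 := hTcomm 0 h0 q hq
      _ ≤ T 1 0 := hTmono 0 h0 q hq 1 h1 hq.2
      _ = T 0 1 := hTcomm 1 h1 0 h0
      _ = 0 := hTid 0 h0)
    (zero_le)
  have hT0' : ∀ q ∈ I01, T q 0 = 0 := fun q hq => by
    rw [hTcomm q hq 0 h0]; exact hT0 q hq
  intro x hx
  unfold tensor
  rw [if_neg hx]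
  rcases eq_or_lt_of_le (zero_le : (0:ℝ≥0∞) ≤ x) with h0x | h0x
  · rw [← h0x]
    simp only [not_lt_zero', iSup_false, iSup_bot]
    rw [hf0, hT0 _ (memg 0)]; rfl
  · apply le_antisymm
    · refine iSup_le fun r => iSup_le fun s => iSup_le fun hrs => ?_
      have hr : r < x := lt_of_le_of_lt le_sup_left hrs
      have hs : s < x := lt_of_le_of_lt le_sup_right hrs
      calc T (f r) (g s) ≤ T (f x) (g s) :=
            hTmono _ (memg s) _ (memf r) _ (memf x) (hfm hr.le)
        _ = T (g s) (f x) := hTcomm _ (memf x) _ (memg s)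
        _ ≤ T (g x) (f x) := hTmono _ (memf x) _ (memg s) _ (memg x) (hgm hs.le)
        _ = T (f x) (g x) := hTcomm _ (memg x) _ (memf x)
    · rcases eq_or_lt_of_le (zero_le : (0:ℝ≥0∞) ≤ (f x)) with hfx | hfx
      · rw [← hfx, hT0 _ (memg x)]; exact zero_le
      rcases eq_or_lt_of_le (zero_le : (0:ℝ≥0∞) ≤ (g x)) with hgx | hgx
      · rw [← hgx, hT0' _ (memf x)]; exact zero_le
      rw [hTlc _ (memg x) _ (memf x) hfx]
      refine iSup₂_le fun p hp => ?_
      have hp1 : p ∈ I01 := ⟨zero_le, hp.le.trans (hf1 x)⟩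
      have : p < ⨆ y ∈ Set.Iio x, f y := by rw [← hflc x h0x (lt_top_iff_ne_top.2 hx)]; exact hp
      obtain ⟨r, hrx, hpr⟩ : ∃ r, r ∈ Set.Iio x ∧ p < f r := by
        simpa [lt_iSup_iff] using this
      have step1 : T p (g x) ≤ T (f r) (g x) :=
        hTmono _ (memg x) _ hp1 _ (memf r) hpr.le
      have step2 : T (f r) (g x) = T (g x) (f r) := hTcomm _ (memf r) _ (memg x)
      rw [step2] at step1
      rw [hTlc _ (memf r) _ (memg x) hgx] at step1
      refine step1.trans (iSup₂_le fun q hq => ?_)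
      have hq1 : q ∈ I01 := ⟨zero_le, hq.le.trans (hg1 x)⟩
      have : q < ⨆ y ∈ Set.Iio x, g y := by rw [← hglc x h0x (lt_top_iff_ne_top.2 hx)]; exact hq
      obtain ⟨t, htx, hqt⟩ : ∃ t, t ∈ Set.Iio x ∧ q < g t := by
        simpa [lt_iSup_iff] using this
      have : T q (f r) ≤ T (g t) (f r) := hTmono _ (memf r) _ hq1 _ (memg t) hqt.le
      rw [hTcomm _ (memg t) _ (memf r)] at this
      refine this.trans ?_
      have hmax : r ⊔ t < x := sup_lt_iff.2 ⟨hrx, htx⟩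
      exact le_iSup_of_le r (le_iSup_of_le t (le_iSup_of_le hmax le_rfl))
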